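/- Let γ, ξ : [0,∞) → ℝ^d be two solutions of the Dyson Brownian motion SDE dλ_i(t) = dB_{ii}(t) + β·Σ_{j≠i} dt/(λ_i(t) − λ_j(t)) (β ≥ 1) driven by the same Brownian motions, and suppose at some time t the gaps satisfy γ_i(t) − γ_{i+1}(t) = ξ_i(t) − ξ_{i+1}(t) > 0 for a fixed index i, and γ_j(t) − γ_{j+1}(t) ≥ ξ_j(t) − ξ_{j+1}(t) > 0 for all j. Then the drift of the i-th gap of γ dominates that of ξ: Σ_{j∉{i,i+1}} [1/(γ_i(t) − γ_j(t)) − 1/(γ_{i+1}(t) − γ_j(t))] ≥ Σ_{j∉{i,i+1}} [1/(ξ_i(t) − ξ_j(t)) − 1/(ξ_{i+1}(t) − ξ_j(t))]. -/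

import Mathlib

private lemma key_aux {a b c : ℝ} (ha : 0 < a) (hc : 0 < c) (hbc : c ≤ b) :
    1 / (a + c) - 1 / c ≤ 1 / (a + b) - 1 / b := by
  have hb : 0 < b := hc.trans_le hbc
  have h1 : 1 / (a + b) - 1 / b = -(a / (b * (a + b))) := by
    rw [div_sub_div _ _ (by positivity) hb.ne', ← neg_div, div_eq_div_iff (by positivity) (by positivity)]
    ring
  have h2 : 1 / (a + c) - 1 / c = -(a / (c * (a + c))) := by
    rw [div_sub_div _ _ (by positivity) hc.ne', ← neg_div, div_eq_div_iff (by positivity) (by positivity)]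
    ring
  rw [h1, h2, neg_le_neg_iff]
  apply div_le_div_of_nonneg_left ha.le (by positivity)
  nlinarith

private lemma chain_aux {d : ℕ} (g x : Fin d → ℝ)
    (hgaps : ∀ j : Fin d, ∀ hj : (j : ℕ) + 1 < d,
      0 < x j - x ⟨(j : ℕ) + 1, hj⟩ ∧
      x j - x ⟨(j : ℕ) + 1, hj⟩ ≤ g j - g ⟨(j : ℕ) + 1, hj⟩) :
    ∀ k m : Fin d, (k : ℕ) < m → 0 < x k - x m ∧ x k - x m ≤ g k - g m := by
  have main : ∀ n : ℕ, ∀ k : ℕ, ∀ h : k + n + 1 < d,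
      0 < x ⟨k, by omega⟩ - x ⟨k + n + 1, h⟩ ∧
      x ⟨k, by omega⟩ - x ⟨k + n + 1, h⟩ ≤ g ⟨k, by omega⟩ - g ⟨k + n + 1, h⟩ := by
    intro n
    induction n with
    | zero =>
      intro k h
      simpa using hgaps ⟨k, by omega⟩ (by simpa using h)
    | succ n ih =>
      intro k h
      have h1 : k + n + 1 < d := by omega
      obtain ⟨p1, p2⟩ := ih k h1
      have h2 := hgaps ⟨k + n + 1, h1⟩ (by omega)
      simp only [Fin.mk.injEq] at h2 ⊢
      obtain ⟨q1, q2⟩ := h2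
      have e : (⟨k + n + 1 + 1, by omega⟩ : Fin d) = ⟨k + (n + 1) + 1, h⟩ := by
        apply Fin.ext; simp; omega
      rw [e] at q1 q2
      constructor <;> linarith
  intro k m hkm
  obtain ⟨n, hn⟩ : ∃ n, (m : ℕ) = (k : ℕ) + n + 1 := ⟨(m : ℕ) - (k : ℕ) - 1, by omega⟩
  have hm : (k : ℕ) + n + 1 < d := hn ▸ m.isLt
  have := main n k hm
  have ek : (⟨(k : ℕ), by omega⟩ : Fin d) = k := rfl
  have em : (⟨(k : ℕ) + n + 1, hm⟩ : Fin d) = m := by apply Fin.ext; simp [hn]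
  rwa [ek, em] at this

/-- Drift comparison for Dyson Brownian motion gaps (deterministic core): if the vectors
`g = γ(t)` and `x = ξ(t)` have strictly positive consecutive gaps, every gap of `g`
dominates the corresponding gap of `x`, and the `i`-th gaps are equal, then the drift of
the `i`-th gap of `g` dominates that of `x`:
`Σ_{j∉{i,i+1}} [1/(g_i − g_j) − 1/(g_{i+1} − g_j)] ≥ Σ_{j∉{i,i+1}} [1/(x_i − x_j) − 1/(x_{i+1} − x_j)]`. -/
theorem stmt_17 {d : ℕ} (g x : Fin d → ℝ) (i : Fin d) (hi : (i : ℕ) + 1 < d)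
    (hgap_i : g i - g ⟨(i : ℕ) + 1, hi⟩ = x i - x ⟨(i : ℕ) + 1, hi⟩)
    (hpos_i : 0 < x i - x ⟨(i : ℕ) + 1, hi⟩)
    (hgaps : ∀ j : Fin d, ∀ hj : (j : ℕ) + 1 < d,
      0 < x j - x ⟨(j : ℕ) + 1, hj⟩ ∧
      x j - x ⟨(j : ℕ) + 1, hj⟩ ≤ g j - g ⟨(j : ℕ) + 1, hj⟩) :
    ∑ j ∈ (Finset.univ.erase i).erase ⟨(i : ℕ) + 1, hi⟩,
        (1 / (x i - x j) - 1 / (x ⟨(i : ℕ) + 1, hi⟩ - x j))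
      ≤ ∑ j ∈ (Finset.univ.erase i).erase ⟨(i : ℕ) + 1, hi⟩,
        (1 / (g i - g j) - 1 / (g ⟨(i : ℕ) + 1, hi⟩ - g j)) := by
  set ip1 : Fin d := ⟨(i : ℕ) + 1, hi⟩ with hip1
  set a : ℝ := x i - x ip1 with ha_def
  have ha : 0 < a := hpos_i
  have hga : g i - g ip1 = a := hgap_i
  have chain := chain_aux g x hgaps
  apply Finset.sum_le_sum
  intro j hj
  have hji : j ≠ i := (Finset.mem_erase.1 (Finset.mem_erase.1 hj).2).1
  have hjip1 : j ≠ ip1 := (Finset.mem_erase.1 hj).1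
  rcases lt_trichotomy (j : ℕ) (i : ℕ) with hlt | heq | hgt
  · -- j < i : use c = x j - x i, b = g j - g i
    obtain ⟨hc, hbc⟩ := chain j i hlt
    set c : ℝ := x j - x i with hc_def
    set b : ℝ := g j - g i with hb_def
    have key := key_aux ha hc hbc
    have ex1 : x i - x j = -c := by simp [hc_def]
    have ex2 : x ip1 - x j = -(a + c) := by simp [hc_def, ha_def]
    have eg1 : g i - g j = -b := by simp [hb_def]
    have eg2 : g ip1 - g j = -(a + b) := by
      have : g ip1 = g i - a := by linarith [hga]
      rw [this]; simp [hb_def]; ring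
    rw [ex1, ex2, eg1, eg2]
    rw [div_neg, div_neg, div_neg, div_neg]
    linarith
  · exact absurd (Fin.ext heq) hji
  · -- j > i : since j ≠ i+1, (i:ℕ)+1 < j
    have hgt' : (ip1 : ℕ) < (j : ℕ) := by
      have : (ip1 : ℕ) ≠ (j : ℕ) := fun h => hjip1 (Fin.ext h.symm)
      simp only [hip1] at this ⊢
      omega
    obtain ⟨hc, hbc⟩ := chain ip1 j hgt'
    set c : ℝ := x ip1 - x j with hc_def
    set b : ℝ := g ip1 - g j with hb_def
    have key := key_aux ha hc hbc
    have ex1 : x i - x j = a + c := by simp [hc_def, ha_def]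
    have eg1 : g i - g j = a + b := by
      have : g i = g ip1 + a := by linarith [hga]
      rw [this]; simp [hb_def]; ring
    rw [ex1, eg1]
    linarith
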